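/- Let Γ_J(k_1) be the N×N lower Jordan block and define ρ_1(n,m) = ((p+k_1)/(p-k_1))^n ((q+k_1)/(q-k_1))^m ρ_1^0 with p,q ≠ ±k_1. Define the vector r_J(n,m) = (ρ_1, ∂_{k_1}ρ_1/1!, ..., ∂^{N-1}_{k_1}ρ_1/(N-1)!)^T. Then (pI - Γ_J(k_1)) r_J(n+1,m) = (pI + Γ_J(k_1)) r_J(n,m). -/

import Mathlib

open Matrix

/-- The N×N lower Jordan block with `a` on the diagonal and 1 on the subdiagonal. -/
def jordanBlock (N : ℕ) (a : ℂ) : Matrix (Fin N) (Fin N) ℂ :=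
  Matrix.of fun i j => if (i : ℕ) = j then a else if (i : ℕ) = (j : ℕ) + 1 then 1 else 0

section Aux

open Filter Topology

lemma analytic_iteratedDeriv {u : ℂ → ℂ} {S : Set ℂ}
    (hu : AnalyticOnNhd ℂ u S) (j : ℕ) : AnalyticOnNhd ℂ (iteratedDeriv j u) S := by
  induction j with
  | zero => simpa [iteratedDeriv_zero] using hu
  | succ j ih => rw [iteratedDeriv_succ]; exact ih.deriv

lemma iteratedDeriv_affine_mul {u : ℂ → ℂ} {S : Set ℂ} (hS : IsOpen S)
    (hu : AnalyticOnNhd ℂ u S) (c d : ℂ) (j : ℕ) :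
    ∀ x ∈ S, iteratedDeriv (j + 1) (fun y => (c + d * y) * u y) x
      = (c + d * x) * iteratedDeriv (j + 1) u x + ((j : ℂ) + 1) * d * iteratedDeriv j u x := by
  induction j with
  | zero =>
    intro x hx
    have hu' : DifferentiableAt ℂ u x := ((hu x hx).differentiableAt)
    have haff : HasDerivAt (fun y : ℂ => c + d * y) d x := by
      simpa using ((hasDerivAt_id x).const_mul d).const_add c
    have H := haff.mul hu'.hasDerivAt
    rw [iteratedDeriv_one, (show deriv (fun y => (c + d * y) * u y) x = _ from H.deriv), iteratedDeriv_one, iteratedDeriv_zero]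
    ring
  | succ j ih =>
    intro x hx
    rw [iteratedDeriv_succ]
    have hev : iteratedDeriv (j + 1) (fun y => (c + d * y) * u y) =ᶠ[𝓝 x]
        fun y => (c + d * y) * iteratedDeriv (j + 1) u y
          + ((j : ℂ) + 1) * d * iteratedDeriv j u y := by
      filter_upwards [hS.mem_nhds hx] with y hy using ih y hy
    rw [hev.deriv_eq]
    have h1 : DifferentiableAt ℂ (iteratedDeriv (j + 1) u) x :=
      ((analytic_iteratedDeriv hu (j + 1)) x hx).differentiableAt
    have h2 : DifferentiableAt ℂ (iteratedDeriv j u) x :=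
      ((analytic_iteratedDeriv hu j) x hx).differentiableAt
    have haff : HasDerivAt (fun y : ℂ => c + d * y) d x := by
      simpa using ((hasDerivAt_id x).const_mul d).const_add c
    have H := (haff.mul h1.hasDerivAt).add
      ((h2.hasDerivAt).const_mul (((j : ℂ) + 1) * d))
    rw [(show deriv (fun y => (c + d * y) * iteratedDeriv (j + 1) u y + ((j : ℂ) + 1) * d * iteratedDeriv j u y) x = _ from H.deriv)]
    have e1 : deriv (iteratedDeriv (j + 1) u) x = iteratedDeriv (j + 1 + 1) u x := by
      simp only [iteratedDeriv_succ]
    have e2 : deriv (iteratedDeriv j u) x = iteratedDeriv (j + 1) u x := by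
      simp only [iteratedDeriv_succ]
    rw [e1, e2]
    push_cast
    ring

lemma jordanBlock_mulVec {N : ℕ} (k : ℂ) (v : Fin N → ℂ) (i : Fin N) :
    (jordanBlock N k).mulVec v i
      = k * v i + (if h : (i : ℕ) = 0 then 0
          else v ⟨(i : ℕ) - 1, lt_trans (by omega) i.isLt⟩) := by
  have hsplit : ∀ j : Fin N, jordanBlock N k i j * v j
      = (if j = i then k * v j else 0)
        + (if (i : ℕ) = (j : ℕ) + 1 then v j else 0) := by
    intro j
    simp only [jordanBlock, Matrix.of_apply]
    by_cases h1 : (i : ℕ) = (j : ℕ)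
    · have : j = i := Fin.ext h1.symm
      simp [this, h1, (by omega : ¬ (i : ℕ) = (i : ℕ) + 1)]
    · have : ¬ j = i := fun h => h1 (by rw [h])
      by_cases h2 : (i : ℕ) = (j : ℕ) + 1 <;> simp [h1, h2, this]
  unfold Matrix.mulVec dotProduct
  rw [Finset.sum_congr rfl (fun j _ => hsplit j), Finset.sum_add_distrib]
  congr 1
  · rw [Finset.sum_ite_eq' Finset.univ i (fun j => k * v j)]
    simp
  · by_cases h0 : (i : ℕ) = 0
    · rw [dif_pos h0]
      apply Finset.sum_eq_zero
      intro j _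
      rw [if_neg]; omega
    · rw [dif_neg h0]
      set i' : Fin N := ⟨(i : ℕ) - 1, lt_trans (by omega) i.isLt⟩ with hi'
      have hcond : ∀ j : Fin N, ((i : ℕ) = (j : ℕ) + 1) ↔ j = i' := by
        intro j
        constructor
        · intro h; apply Fin.ext; simp [hi']; omega
        · intro h; subst h; simp [hi']; omega
      calc (∑ j : Fin N, if (i : ℕ) = (j : ℕ) + 1 then v j else 0)
          = ∑ j : Fin N, if j = i' then v j else 0 := by
            refine Finset.sum_congr rfl fun j _ => ?_
            simp only [hcond j]
        _ = v i' := by rw [Finset.sum_ite_eq' Finset.univ i' v]; simp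

end Aux

/-- The Jordan-block plane wave vector r_J(n,m) whose entries are the Taylor
coefficients ∂ᵏ_{k₁}ρ₁/k! satisfies (pI - Γ_J(k₁)) r_J(n+1,m) = (pI + Γ_J(k₁)) r_J(n,m). -/
theorem plane_wave_shift_jordan (N : ℕ) (p q k₁ ρ0 : ℂ)
    (hp : p ≠ k₁) (hp' : p ≠ -k₁) (hq : q ≠ k₁) (hq' : q ≠ -k₁) :
    let ρ : ℕ → ℕ → ℂ → ℂ := fun n m x =>
      ((p + x) / (p - x)) ^ n * ((q + x) / (q - x)) ^ m * ρ0
    let rJ : ℕ → ℕ → Fin N → ℂ := fun n m j =>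
      iteratedDeriv (j : ℕ) (ρ n m) k₁ / (Nat.factorial (j : ℕ) : ℂ)
    ∀ n m : ℕ,
      (p • (1 : Matrix (Fin N) (Fin N) ℂ) - jordanBlock N k₁).mulVec (rJ (n + 1) m)
        = (p • (1 : Matrix (Fin N) (Fin N) ℂ) + jordanBlock N k₁).mulVec (rJ n m) := by
  intro ρ rJ n m
  classical
  set S : Set ℂ := {x | x ≠ p ∧ x ≠ q} with hS
  have hSopen : IsOpen S := by
    have : S = {x : ℂ | x ≠ p} ∩ {x : ℂ | x ≠ q} := rfl
    rw [this]
    exact (isOpen_ne).inter (isOpen_ne)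
  have hk₁S : k₁ ∈ S := ⟨fun h => hp h.symm, fun h => hq h.symm⟩
  -- analyticity of ρ n m on S
  have hanal : ∀ n' m' : ℕ, AnalyticOnNhd ℂ (ρ n' m') S := by
    intro n' m' x hx
    have hpx : p - x ≠ 0 := sub_ne_zero.mpr (fun h => hx.1 h.symm)
    have hqx : q - x ≠ 0 := sub_ne_zero.mpr (fun h => hx.2 h.symm)
    exact ((((analyticAt_const.add analyticAt_id).div
        (analyticAt_const.sub analyticAt_id) hpx).pow n').mul
      (((analyticAt_const.add analyticAt_id).div
        (analyticAt_const.sub analyticAt_id) hqx).pow m')).mul analyticAt_const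
  set f : ℂ → ℂ := ρ n m with hf
  set g : ℂ → ℂ := ρ (n + 1) m with hg
  -- fundamental identity on S
  have hkey : ∀ x ∈ S, (p + (-1 : ℂ) * x) * g x = (p + (1 : ℂ) * x) * f x := by
    intro x hx
    have hpx : p - x ≠ 0 := sub_ne_zero.mpr (fun h => hx.1 h.symm)
    have hgf : g x = ((p + x) / (p - x)) * f x := by
      simp only [hg, hf, ρ]; ring
    have hmain : (p - x) * g x = (p + x) * f x := by
      rw [hgf]
      field_simp
    linear_combination hmain
  have hFG : (fun y => (p + (-1 : ℂ) * y) * g y) =ᶠ[nhds k₁]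
      (fun y => (p + (1 : ℂ) * y) * f y) := by
    filter_upwards [hSopen.mem_nhds hk₁S] with y hy using hkey y hy
  -- iterated derivative identities at k₁
  have hkey0 : (p - k₁) * g k₁ = (p + k₁) * f k₁ := by
    have := hkey k₁ hk₁S; linear_combination this
  have hkeyj : ∀ j : ℕ,
      (p - k₁) * iteratedDeriv (j + 1) g k₁ - ((j : ℂ) + 1) * iteratedDeriv j g k₁
        = (p + k₁) * iteratedDeriv (j + 1) f k₁ + ((j : ℂ) + 1) * iteratedDeriv j f k₁ := by
    intro j
    have hL := iteratedDeriv_affine_mul hSopen (hanal (n + 1) m) p (-1) j k₁ hk₁S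
    have hR := iteratedDeriv_affine_mul hSopen (hanal n m) p 1 j k₁ hk₁S
    have hE : iteratedDeriv (j + 1) (fun y => (p + (-1 : ℂ) * y) * g y) k₁
        = iteratedDeriv (j + 1) (fun y => (p + (1 : ℂ) * y) * f y) k₁ :=
      hFG.iteratedDeriv_eq (j + 1)
    rw [hL] at hE
    rw [hR] at hE
    linear_combination hE
  -- now the matrix identity, row by row
  funext i
  have lhs_eq : (p • (1 : Matrix (Fin N) (Fin N) ℂ) - jordanBlock N k₁).mulVec (rJ (n + 1) m) i
      = p * rJ (n + 1) m i - (jordanBlock N k₁).mulVec (rJ (n + 1) m) i := by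
    simp [Matrix.sub_mulVec, Matrix.smul_mulVec, Matrix.one_mulVec]
  have rhs_eq : (p • (1 : Matrix (Fin N) (Fin N) ℂ) + jordanBlock N k₁).mulVec (rJ n m) i
      = p * rJ n m i + (jordanBlock N k₁).mulVec (rJ n m) i := by
    simp [Matrix.add_mulVec, Matrix.smul_mulVec, Matrix.one_mulVec]
  rw [lhs_eq, rhs_eq, jordanBlock_mulVec, jordanBlock_mulVec]
  by_cases h0 : (i : ℕ) = 0
  · rw [dif_pos h0, dif_pos h0]
    have : rJ (n + 1) m i = g k₁ ∧ rJ n m i = f k₁ := by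
      constructor <;> simp [rJ, h0, hg, hf]
    rw [this.1, this.2]
    linear_combination hkey0
  · rw [dif_neg h0, dif_neg h0]
    set j : ℕ := (i : ℕ) - 1 with hj
    have hij : (i : ℕ) = j + 1 := by omega
    set i' : Fin N := ⟨(i : ℕ) - 1, lt_trans (by omega) i.isLt⟩ with hi'
    have hfac : ((j + 1).factorial : ℂ) ≠ 0 := Nat.cast_ne_zero.mpr (Nat.factorial_ne_zero _)
    have hfac' : ((j).factorial : ℂ) ≠ 0 := Nat.cast_ne_zero.mpr (Nat.factorial_ne_zero _)
    have hji : ((j : ℂ) + 1) ≠ 0 := Nat.cast_add_one_ne_zero j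
    have er1 : rJ (n + 1) m i = iteratedDeriv (j + 1) g k₁ / ((j + 1).factorial : ℂ) := by
      simp [rJ, hij, hg]
    have er2 : rJ n m i = iteratedDeriv (j + 1) f k₁ / ((j + 1).factorial : ℂ) := by
      simp [rJ, hij, hf]
    have er3 : rJ (n + 1) m i' = iteratedDeriv j g k₁ / ((j).factorial : ℂ) := by
      simp [rJ, hi', hg, hj]
    have er4 : rJ n m i' = iteratedDeriv j f k₁ / ((j).factorial : ℂ) := by
      simp [rJ, hi', hf, hj]
    rw [er1, er2, er3, er4]
    have hfactsucc : ((j + 1).factorial : ℂ) = ((j : ℂ) + 1) * ((j).factorial : ℂ) := by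
      push_cast [Nat.factorial_succ]
      ring
    rw [hfactsucc]
    have key := hkeyj j
    field_simp
    linear_combination key
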